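/- Let φ be a continuous flow on a compact metric space X without singularities. A Borel probability measure μ on X is expansive for φ if and only if there exists α > 0 such that μ(Γ_α(x)) = 0 for μ-almost every x ∈ X. -/

import Mathlib

open MeasureTheory

/-- The dynamical ball `Γ_δ(x)` of a flow. -/
def Gamma {X : Type*} [MetricSpace X] (φ : ℝ → X → X) (δ : ℝ) (x : X) : Set X :=
  {y | ∃ h : ℝ → ℝ, Continuous h ∧ h 0 = 0 ∧ ∀ t : ℝ, dist (φ t x) (φ (h t) y) ≤ δ}

section Aux
variable {X : Type*} [MetricSpace X] [CompactSpace X]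

/-- Uniform smallness of short-time flow displacement. -/
lemma aux_u2 (φ : ℝ → X → X)
    (hcont : Continuous fun p : ℝ × X => φ p.1 p.2)
    (hzero : ∀ x, φ 0 x = x) {η : ℝ} (hη : 0 < η) :
    ∃ r > 0, r ≤ 1 ∧ ∀ (w : X) (v : ℝ), |v| ≤ r → dist (φ v w) w ≤ η := by
  set K : Set (ℝ × X) := {p | |p.1| ≤ 1 ∧ η ≤ dist (φ p.1 p.2) p.2} with hK
  have hKclosed : IsClosed K := by
    apply IsClosed.inter
    · exact isClosed_le (continuous_abs.comp continuous_fst) continuous_const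
    · exact isClosed_le continuous_const (Continuous.dist hcont continuous_snd)
  have hKc : IsCompact K := by
    apply IsCompact.of_isClosed_subset ((isCompact_Icc (a := (-1:ℝ)) (b := 1)).prod
      isCompact_univ) hKclosed
    rintro ⟨v, w⟩ ⟨hv, -⟩
    exact ⟨abs_le.mp hv, Set.mem_univ _⟩
  rcases K.eq_empty_or_nonempty with hKe | hKne
  · refine ⟨1, one_pos, le_refl _, fun w v hv => ?_⟩
    by_contra hlt
    have : (v, w) ∈ K := ⟨hv, le_of_not_ge hlt⟩
    simp [hKe] at this
  · obtain ⟨⟨v₀, w₀⟩, hmem, hmin⟩ := hKc.exists_isMinOn hKne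
      ((continuous_abs.comp continuous_fst).continuousOn)
    have hv₀ : 0 < |v₀| := by
      rcases eq_or_lt_of_le (abs_nonneg v₀) with h | h
      · exfalso
        have hv0 : v₀ = 0 := abs_eq_zero.mp h.symm
        have := hmem.2
        rw [hv0, hzero] at this
        simp at this
        linarith
      · exact h
    refine ⟨|v₀|/2, by linarith, by nlinarith [hmem.1], fun w v hv => ?_⟩
    by_contra hlt
    have hmem2 : (v, w) ∈ K := ⟨by nlinarith [hmem.1], le_of_not_ge hlt⟩
    have := hmin hmem2
    simp only [Set.mem_setOf_eq, Function.comp] at this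
    nlinarith

/-- Uniform continuity of the flow over a compact time interval. -/
lemma aux_u1 (φ : ℝ → X → X)
    (hcont : Continuous fun p : ℝ × X => φ p.1 p.2)
    {η c : ℝ} (hη : 0 < η) (hc : 0 < c) :
    ∃ δ > 0, ∀ x y : X, dist x y ≤ δ → ∀ s : ℝ, |s| ≤ c → dist (φ s x) (φ s y) ≤ η := by
  set K : Set (ℝ × X × X) :=
    {p | |p.1| ≤ c ∧ η ≤ dist (φ p.1 p.2.1) (φ p.1 p.2.2)} with hK
  have hc1 : Continuous fun p : ℝ × X × X => φ p.1 p.2.1 :=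
    hcont.comp (continuous_fst.prodMk (continuous_fst.comp continuous_snd))
  have hc2 : Continuous fun p : ℝ × X × X => φ p.1 p.2.2 :=
    hcont.comp (continuous_fst.prodMk (continuous_snd.comp continuous_snd))
  have hKclosed : IsClosed K := by
    apply IsClosed.inter
    · exact isClosed_le (continuous_abs.comp continuous_fst) continuous_const
    · exact isClosed_le continuous_const (Continuous.dist hc1 hc2)
  have hKc : IsCompact K := by
    apply IsCompact.of_isClosed_subset ((isCompact_Icc (a := (-c:ℝ)) (b := c)).prod
      isCompact_univ) hKclosed
    rintro ⟨v, w⟩ ⟨hv, -⟩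
    exact ⟨abs_le.mp hv, Set.mem_univ _⟩
  rcases K.eq_empty_or_nonempty with hKe | hKne
  · refine ⟨1, one_pos, fun x y hxy s hs => ?_⟩
    by_contra hlt
    have : (s, x, y) ∈ K := ⟨hs, le_of_not_ge hlt⟩
    simp [hKe] at this
  · obtain ⟨⟨s₀, x₀, y₀⟩, hmem, hmin⟩ := hKc.exists_isMinOn hKne
      ((continuous_fst.comp continuous_snd).dist (continuous_snd.comp continuous_snd)).continuousOn
    have hd₀ : 0 < dist x₀ y₀ := by
      rcases eq_or_lt_of_le (dist_nonneg (x := x₀) (y := y₀)) with h | h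
      · exfalso
        have hxy : x₀ = y₀ := by
          rwa [eq_comm, dist_eq_zero] at h
        have := hmem.2
        rw [hxy] at this
        simp at this
        linarith
      · exact h
    refine ⟨dist x₀ y₀ / 2, by linarith, fun x y hxy s hs => ?_⟩
    by_contra hlt
    have hmem2 : (s, x, y) ∈ K := ⟨hs, le_of_not_ge hlt⟩
    have := hmin hmem2
    simp only [Set.mem_setOf_eq, Function.comp] at this
    nlinarith

lemma flow_int (φ : ℝ → X → X) (hzero : ∀ x, φ 0 x = x)
    (hadd : ∀ s t x, φ t (φ s x) = φ (t + s) x)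
    {z : X} {t : ℝ} (hp : φ t z = z) : ∀ k : ℤ, φ (k * t) z = z := by
  intro k
  induction k using Int.induction_on with
  | zero => simpa using hzero z
  | succ n ih =>
      push_cast at ih ⊢
      have h2 := hadd ((n:ℝ) * t) t z
      rw [ih, hp] at h2
      rw [show ((n:ℝ) + 1) * t = t + (n:ℝ) * t by ring]
      exact h2.symm
  | pred n ih =>
      push_cast at ih ⊢
      have h1 : φ (-t) z = z := by
        have h := hadd t (-t) z
        rw [hp, show (-t + t : ℝ) = 0 by ring, hzero] at h
        exact h
      have h2 := hadd (-(n:ℝ) * t) (-t) z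
      rw [ih, h1] at h2
      rw [show (-(n:ℝ) - 1) * t = -t + -(n:ℝ) * t by ring]
      exact h2.symm

/-- Periods are bounded below: there are no small nonzero periods. -/
lemma aux_period (φ : ℝ → X → X)
    (hcont : Continuous fun p : ℝ × X => φ p.1 p.2)
    (hzero : ∀ x, φ 0 x = x)
    (hadd : ∀ s t x, φ t (φ s x) = φ (t + s) x)
    (hnosing : ∀ x : X, ∃ t : ℝ, φ t x ≠ x) :
    ∃ T : ℝ, 0 < T ∧ T ≤ 1 ∧ ∀ (z : X) (t : ℝ), |t| ≤ 2 * T → φ t z = z → t = 0 := by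
  by_contra hcon
  push_neg at hcon
  have hseq : ∀ n : ℕ, ∃ (z : X) (t : ℝ),
      |t| ≤ 2 * (1 / (n + 1)) ∧ φ t z = z ∧ t ≠ 0 := by
    intro n
    have h1 : (0:ℝ) < 1 / (n + 1) := by positivity
    have h2 : (1:ℝ) / (n + 1) ≤ 1 := by
      rw [div_le_one (by positivity)]
      simp
    exact hcon (1 / (n + 1)) h1 h2
  choose z t ht hper htne using hseq
  obtain ⟨z₀, ψ, hψ, hlim⟩ := CompactSpace.tendsto_subseq z
  have htlim : Filter.Tendsto (fun k => t (ψ k)) Filter.atTop (nhds 0) := by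
    apply squeeze_zero_norm (fun k => ht (ψ k))
    have : Filter.Tendsto (fun k : ℕ => 2 * (1 / ((k:ℝ) + 1))) Filter.atTop (nhds 0) := by
      have := tendsto_one_div_add_atTop_nhds_zero_nat (𝕜 := ℝ)
      simpa using (this.const_mul 2)
    apply squeeze_zero (fun k => by positivity) _ this
    intro k
    have hk' : k ≤ ψ k := hψ.le_apply
    have hk : (k:ℝ) + 1 ≤ (ψ k : ℝ) + 1 := by
      have : (k:ℝ) ≤ (ψ k : ℝ) := Nat.cast_le.mpr hk'
      linarith
    gcongr
  -- z₀ is a singularity: contradiction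
  obtain ⟨s, hs⟩ := hnosing z₀
  apply hs
  -- r k = t * fract (s / t)
  set r : ℕ → ℝ := fun k => t (ψ k) * Int.fract (s / t (ψ k)) with hr
  have hreq : ∀ k, φ s (z (ψ k)) = φ (r k) (z (ψ k)) := by
    intro k
    have htk := htne (ψ k)
    have hfr : Int.fract (s / t (ψ k)) = s / t (ψ k) - ⌊s / t (ψ k)⌋ := rfl
    have hsplit : s = r k + (⌊s / t (ψ k)⌋ : ℤ) * t (ψ k) := by
      rw [hr]
      dsimp only
      rw [hfr]
      field_simp
      ring
    calc φ s (z (ψ k)) = φ (r k + (⌊s / t (ψ k)⌋ : ℤ) * t (ψ k)) (z (ψ k)) := by rw [← hsplit]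
      _ = φ (r k) (φ ((⌊s / t (ψ k)⌋ : ℤ) * t (ψ k)) (z (ψ k))) := by rw [hadd]
      _ = φ (r k) (z (ψ k)) := by rw [flow_int φ hzero hadd (hper (ψ k))]
  have habs : Filter.Tendsto (fun k => |t (ψ k)|) Filter.atTop (nhds 0) := by
    simpa using htlim.abs
  have hrlim : Filter.Tendsto r Filter.atTop (nhds 0) := by
    apply squeeze_zero_norm _ habs
    intro k
    have h1 : |Int.fract (s / t (ψ k))| ≤ 1 := by
      rw [abs_le]
      constructor
      · linarith [Int.fract_nonneg (s / t (ψ k))]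
      · linarith [Int.fract_lt_one (s / t (ψ k))]
    calc |r k| = |t (ψ k)| * |Int.fract (s / t (ψ k))| := abs_mul _ _
      _ ≤ |t (ψ k)| * 1 := by
          apply mul_le_mul_of_nonneg_left h1 (abs_nonneg _)
      _ = |t (ψ k)| := by rw [mul_one]
  have lim1 : Filter.Tendsto (fun k => φ s (z (ψ k))) Filter.atTop (nhds (φ s z₀)) := by
    have : Filter.Tendsto (fun k => ((s : ℝ), z (ψ k))) Filter.atTop (nhds (s, z₀)) :=
      (tendsto_const_nhds).prodMk_nhds hlim
    exact (hcont.tendsto (s, z₀)).comp this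
  have lim2 : Filter.Tendsto (fun k => φ (r k) (z (ψ k))) Filter.atTop (nhds z₀) := by
    have : Filter.Tendsto (fun k => (r k, z (ψ k))) Filter.atTop (nhds (0, z₀)) :=
      hrlim.prodMk_nhds hlim
    have := (hcont.tendsto (0, z₀)).comp this
    simpa [hzero, Function.comp_def] using this
  have : Filter.Tendsto (fun k => φ s (z (ψ k))) Filter.atTop (nhds z₀) := by
    rw [show (fun k => φ s (z (ψ k))) = fun k => φ (r k) (z (ψ k)) from funext hreq]
    exact lim2
  exact tendsto_nhds_unique lim1 this

/-- Uniform separation: points moved by a definite time amount move a definite distance. -/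
lemma aux_m (φ : ℝ → X → X)
    (hcont : Continuous fun p : ℝ × X => φ p.1 p.2)
    {T : ℝ} (hT : 0 < T)
    (hP : ∀ (z : X) (t : ℝ), |t| ≤ 2 * T → φ t z = z → t = 0)
    {ε : ℝ} (hε : 0 < ε) (hεT : ε ≤ 2 * T) :
    ∃ m > 0, ∀ (z : X) (t : ℝ), ε ≤ |t| → |t| ≤ 2 * T → m ≤ dist (φ t z) z := by
  rcases isEmpty_or_nonempty X with hX | hX
  · exact ⟨1, one_pos, fun z => (IsEmpty.false z).elim⟩
  set K : Set (ℝ × X) := {p | ε ≤ |p.1| ∧ |p.1| ≤ 2 * T} with hK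
  have hKclosed : IsClosed K := by
    apply IsClosed.inter
    · exact isClosed_le continuous_const (continuous_abs.comp continuous_fst)
    · exact isClosed_le (continuous_abs.comp continuous_fst) continuous_const
  have hKc : IsCompact K := by
    apply IsCompact.of_isClosed_subset ((isCompact_Icc (a := (-(2*T):ℝ)) (b := 2*T)).prod
      isCompact_univ) hKclosed
    rintro ⟨v, w⟩ ⟨-, hv⟩
    exact ⟨abs_le.mp hv, Set.mem_univ _⟩
  obtain ⟨w₀⟩ := hX
  have hKne : K.Nonempty := by
    refine ⟨(2 * T, w₀), ?_⟩
    simp only [hK, Set.mem_setOf_eq]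
    rw [abs_of_pos (by linarith : (0:ℝ) < 2 * T)]
    exact ⟨hεT, le_refl _⟩
  obtain ⟨⟨t₀, z₀⟩, hmem, hmin⟩ := hKc.exists_isMinOn hKne
    ((Continuous.dist hcont continuous_snd).continuousOn)
  have hpos : 0 < dist (φ t₀ z₀) z₀ := by
    rcases eq_or_lt_of_le (dist_nonneg (x := φ t₀ z₀) (y := z₀)) with h | h
    · exfalso
      have hfix : φ t₀ z₀ = z₀ := by rwa [eq_comm, dist_eq_zero] at h
      have ht0 := hP z₀ t₀ hmem.2 hfix
      have h1' := hmem.1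
      rw [ht0, abs_zero] at h1'
      linarith
    · exact h
  refine ⟨dist (φ t₀ z₀) z₀, hpos, fun z t h1 h2 => ?_⟩
  exact hmin (⟨h1, h2⟩ : (t, z) ∈ K)

/-- The key reparametrization control: any reparametrization moves almost isometrically
on short time scales. -/
lemma aux_A (φ : ℝ → X → X)
    (hzero : ∀ x, φ 0 x = x)
    (hadd : ∀ s t x, φ t (φ s x) = φ (t + s) x)
    {T ε m δ : ℝ} (hT : 0 < T) (hε : 0 < ε) (hεT : ε ≤ T) (hm : 0 < m)
    (hsep : ∀ (z : X) (t : ℝ), ε ≤ |t| → |t| ≤ 2 * T → m ≤ dist (φ t z) z)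
    (hδ : 0 < δ) (hδm : δ ≤ m / 3)
    (hu1 : ∀ x y : X, dist x y ≤ δ → ∀ s : ℝ, |s| ≤ T → dist (φ s x) (φ s y) ≤ m / 3)
    (x y : X) (h : ℝ → ℝ) (hh : Continuous h)
    (hcl : ∀ t : ℝ, dist (φ t x) (φ (h t) y) ≤ δ) :
    ∀ t s : ℝ, |s| ≤ T → |h (t + s) - h t - s| ≤ ε := by
  intro t s₀ hs₀
  by_contra hbig
  push_neg at hbig
  -- the continuous function s ↦ |h (t+s) - h t - s| takes the value ε somewhere in uIcc 0 s₀
  set w : ℝ → ℝ := fun s => |h (t + s) - h t - s| with hw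
  have hwc : Continuous w := by
    apply Continuous.abs
    exact ((hh.comp (continuous_const.add continuous_id)).sub continuous_const).sub continuous_id
  have hw0 : w 0 = 0 := by simp [hw]
  have hεmem : ε ∈ Set.uIcc (w 0) (w s₀) := by
    rw [hw0]
    rcases le_total 0 (w s₀) with h' | h'
    · rw [Set.uIcc_of_le h']
      exact ⟨le_of_lt hε, le_of_lt hbig⟩
    · exfalso
      have h2 : (0:ℝ) ≤ w s₀ := abs_nonneg _
      have h3 : ε < w s₀ := hbig
      linarith
  obtain ⟨u, hu, hwu⟩ := intermediate_value_uIcc (hwc.continuousOn) hεmem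
  have huT : |u| ≤ T := by
    rcases Set.mem_uIcc.mp hu with ⟨h1, h2⟩ | ⟨h1, h2⟩ <;> rw [abs_le] <;>
      cases' abs_le.mp hs₀ with ha hb <;> constructor <;> linarith
  -- now the flow separation at time v := h (t+u) - h t - u applied to φ u (φ (h t) y)
  set v : ℝ := h (t + u) - h t - u with hv
  have hvabs : |v| = ε := hwu
  have hvT : |v| ≤ 2 * T := by rw [hvabs]; linarith
  have hvε : ε ≤ |v| := le_of_eq hvabs.symm
  have hsep' := hsep (φ u (φ (h t) y)) v hvε hvT
  -- compute φ v (φ u (φ (h t) y)) = φ (h (t+u)) y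
  have hcomp : φ v (φ u (φ (h t) y)) = φ (h (t + u)) y := by
    rw [hadd (h t) u y, hadd (u + h t) v y]
    congr 1
    rw [hv]; ring
  -- distance estimate
  have hd1 : dist (φ (h (t + u)) y) (φ u (φ t x)) ≤ δ := by
    rw [hadd t u x, show u + t = t + u by ring]
    exact dist_comm (φ (t+u) x) (φ (h (t+u)) y) ▸ (hcl (t + u))
  have hd2 : dist (φ u (φ t x)) (φ u (φ (h t) y)) ≤ m / 3 := by
    apply hu1 _ _ _ u huT
    exact hcl t
  have : dist (φ v (φ u (φ (h t) y))) (φ u (φ (h t) y)) ≤ δ + m / 3 := by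
    rw [hcomp]
    calc dist (φ (h (t + u)) y) (φ u (φ (h t) y))
        ≤ dist (φ (h (t + u)) y) (φ u (φ t x)) + dist (φ u (φ t x)) (φ u (φ (h t) y)) :=
          dist_triangle _ _ _
      _ ≤ δ + m / 3 := add_le_add hd1 hd2
  linarith [hsep']

end Aux

section RealAux

/-- Chain estimate: an almost-isometric function grows linearly. -/
lemma aux_B2 {g : ℝ → ℝ} {T ε : ℝ} (hT : 0 < T) (hε : 0 < ε)
    (H : ∀ t s : ℝ, |s| ≤ T → |g (t + s) - g t - s| ≤ ε) :
    ∀ n : ℕ, ∀ t s : ℝ, 0 ≤ s → s ≤ (n + 1) * T → g t + s - (n + 1) * ε ≤ g (t + s) := by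
  intro n
  induction n with
  | zero =>
      intro t s hs0 hs1
      push_cast at hs1
      have := H t s (by rw [abs_of_nonneg hs0]; linarith)
      cases' abs_le.mp this with h1 h2
      simp only [Nat.cast_zero]
      linarith
  | succ n ih =>
      intro t s hs0 hs1
      rcases le_or_gt s ((n + 1) * T) with hle | hgt
      · have := ih t s hs0 hle
        push_cast
        push_cast at this
        nlinarith [hε]
      · have hsT : 0 ≤ s - T := by nlinarith
        have h1 := ih t (s - T) hsT (by push_cast; push_cast at hgt hs1; nlinarith)
        have h2 := H (t + (s - T)) T (by rw [abs_of_pos hT])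
        cases' abs_le.mp h2 with h2a h2b
        have heq : t + (s - T) + T = t + s := by ring
        rw [heq] at h2a h2b
        push_cast
        push_cast at h1
        linarith

/-- Coarse injectivity. -/
lemma aux_C {g : ℝ → ℝ} {T ε : ℝ} (hT : 0 < T) (hε : 0 < ε) (hεT : ε ≤ T / 2)
    (H : ∀ t s : ℝ, |s| ≤ T → |g (t + s) - g t - s| ≤ ε) :
    ∀ t t' : ℝ, t ≤ t' → g t' ≤ g t → t' - t ≤ 2 * ε := by
  intro t t' htt hgg
  set s := t' - t with hs
  have hs0 : 0 ≤ s := by linarith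
  set n : ℕ := ⌊s / T⌋₊ with hn
  have hsn : s ≤ (n + 1) * T := by
    have := Nat.lt_floor_add_one (s / T)
    have h2 : s / T < n + 1 := by
      rw [hn]; exact_mod_cast this
    calc s = (s / T) * T := (div_mul_cancel₀ s (ne_of_gt hT)).symm
      _ ≤ (n + 1) * T := by nlinarith
  have hB := aux_B2 hT hε H n t s hs0 hsn
  rw [show t + s = t' by rw [hs]; ring] at hB
  have hnle : (n : ℝ) ≤ s / T := Nat.floor_le (by positivity)
  have h1 : s ≤ (n + 1) * ε := by linarith
  have h2 : (n : ℝ) * ε ≤ (s / T) * ε := by nlinarith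
  have h3 : (s / T) * ε ≤ (s / T) * (T / 2) :=
    mul_le_mul_of_nonneg_left hεT (div_nonneg hs0 (le_of_lt hT))
  have h4 : (s / T) * (T / 2) = s / 2 := by field_simp
  nlinarith

/-- `g` tends to `+∞`. -/
lemma aux_D1 {g : ℝ → ℝ} {T ε : ℝ} (hT : 0 < T) (hε : 0 < ε) (hεT : ε ≤ T / 2)
    (H : ∀ t s : ℝ, |s| ≤ T → |g (t + s) - g t - s| ≤ ε) :
    ∀ c : ℝ, ∃ t : ℝ, c ≤ g t := by
  intro c
  obtain ⟨n, hnc⟩ := exists_nat_ge ((c - g 0 + ε) * 2 / T)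
  refine ⟨n * T, ?_⟩
  have hB := aux_B2 hT hε H n 0 (n * T) (by positivity) (by nlinarith)
  rw [zero_add] at hB
  have hnc' : (c - g 0 + ε) * 2 ≤ n * T := by
    rw [div_le_iff₀ hT] at hnc
    linarith
  have hmul : (n : ℝ) * ε ≤ (n : ℝ) * (T / 2) :=
    mul_le_mul_of_nonneg_left hεT (Nat.cast_nonneg n)
  nlinarith

/-- `g` tends to `-∞`. -/
lemma aux_D2 {g : ℝ → ℝ} {T ε : ℝ} (hT : 0 < T) (hε : 0 < ε) (hεT : ε ≤ T / 2)
    (H : ∀ t s : ℝ, |s| ≤ T → |g (t + s) - g t - s| ≤ ε) :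
    ∀ c : ℝ, ∃ t₀ : ℝ, ∀ t ≤ t₀, g t < c := by
  intro c
  refine ⟨min 0 (2 * (c - g 0 - ε) - 2), fun t ht => ?_⟩
  have ht0 : t ≤ 0 := le_trans ht (min_le_left _ _)
  have ht1 : t ≤ 2 * (c - g 0 - ε) - 2 := le_trans ht (min_le_right _ _)
  set n : ℕ := ⌊-t / T⌋₊ with hn
  have hsn : -t ≤ (n + 1) * T := by
    have h2 : -t / T < n + 1 := by
      rw [hn]; exact_mod_cast Nat.lt_floor_add_one (-t / T)
    calc -t = (-t / T) * T := (div_mul_cancel₀ (-t) (ne_of_gt hT)).symm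
      _ ≤ (n + 1) * T := by nlinarith
  have hB := aux_B2 hT hε H n t (-t) (by linarith) hsn
  rw [show t + -t = 0 by ring] at hB
  have hnle : (n : ℝ) ≤ -t / T := Nat.floor_le (div_nonneg (by linarith) (le_of_lt hT))
  -- g t ≤ g 0 + t + (n+1) ε ≤ g 0 + t/2 + ε
  have h1 : g t ≤ g 0 + t + (n + 1) * ε := by linarith
  have h2 : (n : ℝ) * ε ≤ (-t / T) * ε := by nlinarith
  have h3 : (-t / T) * ε ≤ (-t / T) * (T / 2) :=
    mul_le_mul_of_nonneg_left hεT (div_nonneg (by linarith) (le_of_lt hT))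
  have h4 : (-t / T) * (T / 2) = -t / 2 := by field_simp
  nlinarith

end RealAux

section Key
variable {X : Type*} [MetricSpace X] [CompactSpace X]

/-- Bowen–Walters type corollary: for every `α > 0` there is `δ > 0` such that
`y ∈ Γ_δ(x)` implies `Γ_δ(x) ⊆ Γ_α(y)`. -/
lemma aux_key (φ : ℝ → X → X)
    (hcont : Continuous fun p : ℝ × X => φ p.1 p.2)
    (hzero : ∀ x, φ 0 x = x)
    (hadd : ∀ s t x, φ t (φ s x) = φ (t + s) x)
    (hnosing : ∀ x : X, ∃ t : ℝ, φ t x ≠ x)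
    {α : ℝ} (hα : 0 < α) :
    ∃ δ > 0, ∀ x y : X, y ∈ Gamma φ δ x → Gamma φ δ x ⊆ Gamma φ α y := by
  obtain ⟨T, hT, hT1, hP⟩ := aux_period φ hcont hzero hadd hnosing
  obtain ⟨r, hrpos, hr1, hU2⟩ := aux_u2 φ hcont hzero (half_pos hα)
  set ε : ℝ := min (T / 4) (r / 11) with hεdef
  have hεpos : 0 < ε := lt_min (by linarith) (by linarith)
  have hεT4 : ε ≤ T / 4 := min_le_left _ _
  have hεr : ε ≤ r / 11 := min_le_right _ _
  have hεT : ε ≤ T := by linarith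
  have hεT2 : ε ≤ T / 2 := by linarith
  have h3εT : 3 * ε ≤ T := by linarith
  obtain ⟨m, hmpos, hsep⟩ := aux_m φ hcont hT hP hεpos (by linarith)
  obtain ⟨δ₁, hδ₁pos, hU1⟩ := aux_u1 φ hcont (by positivity : (0:ℝ) < m / 3) hT
  set δ : ℝ := min δ₁ (min (m / 3) (α / 4)) with hδdef
  have hδpos : 0 < δ := lt_min hδ₁pos (lt_min (by positivity) (by linarith))
  have hδm : δ ≤ m / 3 := le_trans (min_le_right _ _) (min_le_left _ _)
  have hδα : δ ≤ α / 4 := le_trans (min_le_right _ _) (min_le_right _ _)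
  have hδδ₁ : δ ≤ δ₁ := min_le_left _ _
  refine ⟨δ, hδpos, ?_⟩
  rintro x y ⟨g, hg, hg0, hgd⟩ z ⟨h, hh, hh0, hhd⟩
  have hu1' : ∀ a b : X, dist a b ≤ δ → ∀ s : ℝ, |s| ≤ T → dist (φ s a) (φ s b) ≤ m / 3 :=
    fun a b hab s hs => hU1 a b (le_trans hab hδδ₁) s hs
  have Hg : ∀ t s : ℝ, |s| ≤ T → |g (t + s) - g t - s| ≤ ε :=
    aux_A φ hzero hadd hT hεpos hεT hmpos hsep hδpos hδm hu1' x y g hg hgd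
  have Hh : ∀ t s : ℝ, |s| ≤ T → |h (t + s) - h t - s| ≤ ε :=
    aux_A φ hzero hadd hT hεpos hεT hmpos hsep hδpos hδm hu1' x z h hh hhd
  -- the "inverse" of g
  set S : ℝ → Set ℝ := fun s => {t | s ≤ g t} with hS
  have hSne : ∀ s, (S s).Nonempty := by
    intro s
    obtain ⟨t, ht⟩ := aux_D1 hT hεpos hεT2 Hg s
    exact ⟨t, ht⟩
  have hSbdd : ∀ s, BddBelow (S s) := by
    intro s
    obtain ⟨t₀, ht₀⟩ := aux_D2 hT hεpos hεT2 Hg s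
    refine ⟨t₀, fun u hu => ?_⟩
    by_contra hlt
    push_neg at hlt
    exact absurd hu (not_le.mpr (ht₀ u (le_of_lt hlt)))
  have hSclosed : ∀ s, IsClosed (S s) := fun s => isClosed_le continuous_const hg
  set G : ℝ → ℝ := fun s => sInf (S s) with hGdef
  have hGmem : ∀ s, G s ∈ S s := fun s => (hSclosed s).csInf_mem (hSne s) (hSbdd s)
  have hGge : ∀ s, s ≤ g (G s) := fun s => hGmem s
  have hGeq : ∀ s, g (G s) = s := by
    intro s
    by_contra hne
    have hlt : s < g (G s) := lt_of_le_of_ne (hGge s) (Ne.symm hne)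
    obtain ⟨d, hd, hball⟩ := Metric.continuousAt_iff.mp hg.continuousAt (g (G s) - s)
      (by linarith)
    have hmem2 : G s - d / 2 ∈ S s := by
      have hdist : dist (G s - d / 2) (G s) < d := by
        rw [Real.dist_eq, show G s - d / 2 - G s = -(d/2) by ring, abs_neg,
          abs_of_pos (by linarith)]
        linarith
      have hb := hball hdist
      rw [Real.dist_eq] at hb
      have := abs_lt.mp hb
      have : s ≤ g (G s - d / 2) := by linarith [this.1]
      exact this
    have := csInf_le (hSbdd s) hmem2
    simp only [hGdef] at this ⊢
    linarith
  have hGmono : Monotone G := by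
    intro s s' hss
    exact csInf_le_csInf (hSbdd s) (hSne s') (fun t ht => le_trans hss ht)
  have houp : ∀ s u : ℝ, s ≤ u → u ≤ s + ε → G u ≤ G s + (u - s) + 2 * ε := by
    intro s u hsu hu
    have hstep : |(u - s) + 2 * ε| ≤ T := by
      rw [abs_of_pos (by linarith)]
      linarith
    have := Hg (G s) ((u - s) + 2 * ε) hstep
    have hge : u ≤ g (G s + ((u - s) + 2 * ε)) := by
      cases' abs_le.mp this with h1 h2
      rw [hGeq s] at h1 h2
      linarith
    have : G u ≤ G s + ((u - s) + 2 * ε) := csInf_le (hSbdd u) hge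
    linarith
  have hG0le : G 0 ≤ 0 := csInf_le (hSbdd 0) (by simp only [hS, Set.mem_setOf_eq, hg0]; exact le_refl 0)
  have hG0ge : -(2 * ε) ≤ G 0 := by
    have := aux_C hT hεpos hεT2 Hg (G 0) 0 hG0le (by rw [hg0, hGeq])
    linarith
  -- the reparametrization sending y to z, before smoothing
  set k₀ : ℝ → ℝ := fun u => h (G u) with hk₀def
  have hk₀meas : Measurable k₀ := hh.measurable.comp hGmono.measurable
  have hk₀close : ∀ u : ℝ, dist (φ u y) (φ (k₀ u) z) ≤ 2 * δ := by
    intro u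
    have h1 : dist (φ (G u) x) (φ (g (G u)) y) ≤ δ := hgd (G u)
    have h2 : dist (φ (G u) x) (φ (h (G u)) z) ≤ δ := hhd (G u)
    rw [hGeq u] at h1
    calc dist (φ u y) (φ (k₀ u) z) ≤ dist (φ u y) (φ (G u) x) + dist (φ (G u) x) (φ (k₀ u) z) :=
          dist_triangle _ _ _
      _ ≤ δ + δ := add_le_add (by rw [dist_comm]; exact h1) h2
      _ = 2 * δ := by ring
  have hosc : ∀ s u : ℝ, s ≤ u → u ≤ s + ε → |k₀ u - k₀ s| ≤ 4 * ε := by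
    intro s u hsu hu
    have hd0 : 0 ≤ G u - G s := by linarith [hGmono hsu]
    have hd3 : G u - G s ≤ 3 * ε := by linarith [houp s u hsu hu]
    have := Hh (G s) (G u - G s) (by rw [abs_of_nonneg hd0]; linarith)
    rw [show G s + (G u - G s) = G u by ring] at this
    cases' abs_le.mp this with h1 h2
    rw [abs_le]
    constructor <;> simp only [hk₀def] <;> linarith
  have hk00 : |k₀ 0| ≤ 3 * ε := by
    have hG0abs : |-(G 0)| ≤ T := by
      rw [abs_neg, abs_of_nonpos hG0le]
      linarith
    have := Hh (G 0) (-(G 0)) hG0abs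
    rw [show G 0 + -(G 0) = 0 by ring, hh0] at this
    cases' abs_le.mp this with h1 h2
    rw [abs_le]
    constructor <;> simp only [hk₀def] <;> [nlinarith [abs_nonneg (G 0)]; nlinarith]
  -- interval integrability of k₀
  have hint : ∀ a b : ℝ, IntervalIntegrable k₀ MeasureTheory.volume a b := by
    intro a b
    rw [intervalIntegrable_iff]
    have hcpt : IsCompact (Set.Icc (G (min a b)) (G (max a b))) := isCompact_Icc
    obtain ⟨C, hC⟩ := hcpt.exists_bound_of_continuousOn hh.continuousOn
    apply MeasureTheory.Measure.integrableOn_of_bounded (M := C)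
    · rw [Set.uIoc_eq_union]
      exact ne_of_lt (lt_of_le_of_lt (measure_union_le _ _)
        (ENNReal.add_lt_top.mpr ⟨by rw [Real.volume_Ioc]; exact ENNReal.ofReal_lt_top,
          by rw [Real.volume_Ioc]; exact ENNReal.ofReal_lt_top⟩))
    · exact hk₀meas.aestronglyMeasurable
    · rw [MeasureTheory.ae_restrict_iff' measurableSet_uIoc]
      apply MeasureTheory.ae_of_all
      intro u hu
      have h1 : min a b ≤ u := (Set.uIoc_subset_uIcc hu).1
      have h2 : u ≤ max a b := (Set.uIoc_subset_uIcc hu).2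
      exact hC (G u) ⟨hGmono h1, hGmono h2⟩
  -- the smoothed reparametrization
  set k : ℝ → ℝ := fun s => (∫ u in s..(s + ε), k₀ u) / ε with hkdef
  have hkc : Continuous k := by
    have hF := intervalIntegral.continuous_primitive hint 0
    have heq : k = fun s =>
        ((∫ u in (0:ℝ)..(s + ε), k₀ u) - ∫ u in (0:ℝ)..s, k₀ u) / ε := by
      funext s
      rw [hkdef]
      congr 1
      rw [intervalIntegral.integral_interval_sub_left (hint 0 (s + ε)) (hint 0 s)]
    rw [heq]
    exact ((hF.comp (continuous_id.add continuous_const)).sub hF).div_const ε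
  have hkosc : ∀ s : ℝ, |k s - k₀ s| ≤ 4 * ε := by
    intro s
    have hsub : (∫ u in s..(s + ε), (k₀ u - k₀ s)) =
        (∫ u in s..(s + ε), k₀ u) - ε * k₀ s := by
      rw [intervalIntegral.integral_sub (hint s (s + ε)) intervalIntegrable_const,
        intervalIntegral.integral_const]
      simp only [add_sub_cancel_left, smul_eq_mul]
    have hbound : ‖∫ u in s..(s + ε), (k₀ u - k₀ s)‖ ≤ (4 * ε) * |(s + ε) - s| := by
      apply intervalIntegral.norm_integral_le_of_norm_le_const
      intro u hu
      rw [Set.uIoc_of_le (by linarith : s ≤ s + ε)] at hu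
      rw [Real.norm_eq_abs]
      exact hosc s u (le_of_lt hu.1) hu.2
    rw [hsub, Real.norm_eq_abs, show (s + ε) - s = ε by ring, abs_of_pos hεpos] at hbound
    have : |k s - k₀ s| = |(∫ u in s..(s + ε), k₀ u) - ε * k₀ s| / ε := by
      rw [hkdef]
      simp only []
      rw [show (∫ u in s..(s + ε), k₀ u) / ε - k₀ s
          = ((∫ u in s..(s + ε), k₀ u) - ε * k₀ s) / ε by field_simp,
        abs_div, abs_of_pos hεpos]
    rw [this, div_le_iff₀ hεpos]
    linarith [hbound]
  have hk0small : |k 0| ≤ 7 * ε := by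
    calc |k 0| ≤ |k 0 - k₀ 0| + |k₀ 0| := by
          have := abs_sub_abs_le_abs_sub (k 0) (k₀ 0)
          have h2 := abs_add_le (k 0 - k₀ 0) (k₀ 0)
          rw [show k 0 - k₀ 0 + k₀ 0 = k 0 by ring] at h2
          exact h2
      _ ≤ 4 * ε + 3 * ε := add_le_add (hkosc 0) hk00
      _ = 7 * ε := by ring
  -- the final reparametrization
  refine ⟨fun s => k s - k 0 * max 0 (1 - |s|), ?_, ?_, ?_⟩
  · exact hkc.sub (continuous_const.mul (continuous_const.max
      (continuous_const.sub continuous_abs)))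
  · simp
  · intro s
    set v : ℝ := (k s - k 0 * max 0 (1 - |s|)) - k₀ s with hvdef
    have hmax01 : 0 ≤ max 0 (1 - |s|) ∧ max 0 (1 - |s|) ≤ 1 := by
      constructor
      · exact le_max_left _ _
      · apply max_le (by norm_num)
        have := abs_nonneg s
        linarith
    have hvabs : |v| ≤ 11 * ε := by
      rw [hvdef]
      calc |(k s - k 0 * max 0 (1 - |s|)) - k₀ s|
          ≤ |k s - k₀ s| + |k 0 * max 0 (1 - |s|)| := by
            have := abs_sub (k s - k₀ s) (k 0 * max 0 (1 - |s|))
            rw [show k s - k₀ s - k 0 * max 0 (1 - |s|)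
              = (k s - k 0 * max 0 (1 - |s|)) - k₀ s by ring] at this
            exact this
        _ ≤ 4 * ε + 7 * ε := by
            apply add_le_add (hkosc s)
            rw [abs_mul, abs_of_nonneg hmax01.1]
            calc |k 0| * max 0 (1 - |s|) ≤ |k 0| * 1 :=
                  mul_le_mul_of_nonneg_left hmax01.2 (abs_nonneg _)
              _ ≤ 7 * ε := by rw [mul_one]; exact hk0small
        _ = 11 * ε := by ring
    have hvr : |v| ≤ r := le_trans hvabs (by linarith)
    have hflow : φ (k s - k 0 * max 0 (1 - |s|)) z = φ v (φ (k₀ s) z) := by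
      rw [hadd (k₀ s) v z]
      congr 1
      rw [hvdef]; ring
    calc dist (φ s y) (φ (k s - k 0 * max 0 (1 - |s|)) z)
        ≤ dist (φ s y) (φ (k₀ s) z) + dist (φ (k₀ s) z) (φ (k s - k 0 * max 0 (1 - |s|)) z) :=
          dist_triangle _ _ _
      _ ≤ 2 * δ + α / 2 := by
          apply add_le_add (hk₀close s)
          rw [hflow, dist_comm]
          exact hU2 (φ (k₀ s) z) v hvr
      _ ≤ α := by linarith

end Key

/-- For a continuous flow without singularities of a compact metric space, a Borel
probability measure is expansive iff `μ(Γ_α(x)) = 0` for `μ`-a.e. `x`, for some `α > 0`. -/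
theorem expansive_iff_ae
    {X : Type*} [MetricSpace X] [CompactSpace X] [MeasurableSpace X] [BorelSpace X]
    (φ : ℝ → X → X)
    (hcont : Continuous fun p : ℝ × X => φ p.1 p.2)
    (hzero : ∀ x, φ 0 x = x)
    (hadd : ∀ s t x, φ t (φ s x) = φ (t + s) x)
    (hnosing : ∀ x : X, ∃ t : ℝ, φ t x ≠ x)
    (μ : Measure X) [IsProbabilityMeasure μ] :
    (∃ δ > 0, ∀ x : X, μ (Gamma φ δ x) = 0) ↔
      (∃ α > 0, ∀ᵐ x ∂μ, μ (Gamma φ α x) = 0) := by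
  constructor
  · rintro ⟨δ, hδ, hall⟩
    exact ⟨δ, hδ, MeasureTheory.ae_of_all μ hall⟩
  · rintro ⟨α, hα, hae⟩
    obtain ⟨δ, hδ, hkey⟩ := aux_key φ hcont hzero hadd hnosing hα
    refine ⟨δ, hδ, fun x => ?_⟩
    by_cases hex : ∃ y ∈ Gamma φ δ x, μ (Gamma φ α y) = 0
    · obtain ⟨y, hy, hy0⟩ := hex
      exact measure_mono_null (hkey x y hy) hy0
    · push_neg at hex
      have hsub : Gamma φ δ x ⊆ {w | ¬ μ (Gamma φ α w) = 0} := fun y hy => hex y hy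
      exact measure_mono_null hsub (MeasureTheory.ae_iff.mp hae)
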